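/- arXiv:2404.12989 — 2 statements merged into one kernel-verified Lean document; each statement's English description precedes it below -/
import Mathlib

section
/- Let A be a p×q fully interlacing matrix of formal power series and r a positive integer. Then the p×(rq) matrix S^{(r)}A = (S_0^{(r)}A | S_1^{(r)}A | ... | S_{r-1}^{(r)}A), obtained by horizontally concatenating the entrywise Veronese r-sections, is fully interlacing. Moreover, Lace(S^{(r)}A) equals the submatrix of Lace(A) consisting of all rows whose index is congruent to one of 0, 1, ..., p-1 modulo rp. -/
open scoped BigOperators

/-- The coefficient of `x^n` in a power series, for an integer `n`
(zero when `n < 0`). -/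
noncomputable def intCoeff (A : PowerSeries ℝ) (n : ℤ) : ℝ :=
  if 0 ≤ n then PowerSeries.coeff n.toNat A else 0

/-- A `ℤ × ℤ` matrix is totally positive (TP) if every finite square
submatrix (rows and columns chosen in increasing order) has nonnegative
determinant. -/
def TP (M : ℤ → ℤ → ℝ) : Prop :=
  ∀ (n : ℕ) (r c : Fin n → ℤ), StrictMono r → StrictMono c →
    0 ≤ (Matrix.of fun a b => M (r a) (c b)).det

/-- The interlacing matrix `Lace(A)` of a `p × q` matrix of formal power
series: the `(u,v)`-entry, for `u = p·u' + i` (`0 ≤ i < p`) and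
`v = q·v' + j` (`0 ≤ j < q`), is the coefficient of `x^(v'-u')` in `A i j`. -/
noncomputable def lace {p q : ℕ} [NeZero p] [NeZero q]
    (A : Fin p → Fin q → PowerSeries ℝ) : ℤ → ℤ → ℝ := fun u v =>
  intCoeff
    (A ⟨(u % (p : ℤ)).toNat, by
          have hp : (0 : ℤ) < (p : ℤ) := by
            exact_mod_cast Nat.pos_of_ne_zero (NeZero.ne p)
          have h1 := Int.emod_nonneg u hp.ne'
          have h2 := Int.emod_lt_of_pos u hp
          omega⟩
       ⟨(v % (q : ℤ)).toNat, by
          have hq : (0 : ℤ) < (q : ℤ) := by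
            exact_mod_cast Nat.pos_of_ne_zero (NeZero.ne q)
          have h1 := Int.emod_nonneg v hq.ne'
          have h2 := Int.emod_lt_of_pos v hq
          omega⟩)
    (v / (q : ℤ) - u / (p : ℤ))

/-- A matrix of formal power series is fully interlacing when its
interlacing matrix is totally positive. -/
def FullyInterlacing {p q : ℕ} [NeZero p] [NeZero q]
    (A : Fin p → Fin q → PowerSeries ℝ) : Prop :=
  TP (lace A)

/-- A sequence of power series viewed as a `p × 1` column matrix. -/
noncomputable def colMat {p : ℕ} (A : Fin p → PowerSeries ℝ) :
    Fin p → Fin 1 → PowerSeries ℝ := fun i _ => A i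

/-- `A(x)` interlaces `B(x)`: the `2 × 1` column `(A, B)ᵀ` is fully
interlacing. -/
def SeriesInterlaces (A B : PowerSeries ℝ) : Prop :=
  FullyInterlacing (colMat ![A, B])

/-- A power series is AESW (a Pólya frequency sequence) when its Toeplitz
matrix `(a_{v-u})` is totally positive. -/
def IsAESW (A : PowerSeries ℝ) : Prop :=
  TP fun u v => intCoeff A (v - u)

/-- The `k`-th Veronese `r`-section `S_k^{(r)} A(x) = ∑_{n ≥ 0} a_{k+rn} xⁿ`. -/
noncomputable def veronese (r k : ℕ) (A : PowerSeries ℝ) : PowerSeries ℝ :=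
  PowerSeries.mk fun n => PowerSeries.coeff (k + r * n) A
/-- The horizontal concatenation
`S^{(r)} A = (S₀^{(r)}A | S₁^{(r)}A | ⋯ | S_{r-1}^{(r)}A)` of the
entrywise Veronese `r`-sections of a `p × q` matrix of power series. -/
noncomputable def sectMat {p q : ℕ} [NeZero q] (r : ℕ)
    (A : Fin p → Fin q → PowerSeries ℝ) : Fin p → Fin (r * q) → PowerSeries ℝ :=
  fun i j => veronese r ((j : ℕ) / q)
    (A i ⟨(j : ℕ) % q, Nat.mod_lt _ (Nat.pos_of_ne_zero (NeZero.ne q))⟩)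

private lemma lace_sect_key {p q : ℕ} [NeZero p] [NeZero q] (r : ℕ) [NeZero r]
    (A : Fin p → Fin q → PowerSeries ℝ) (u v : ℤ) :
    lace (sectMat r A) u v =
      lace A ((p : ℤ) * ((r : ℤ) * (u / (p : ℤ))) + u % (p : ℤ)) v := by
  have hp : (0 : ℤ) < (p : ℤ) := by exact_mod_cast Nat.pos_of_ne_zero (NeZero.ne p)
  have hq : (0 : ℤ) < (q : ℤ) := by exact_mod_cast Nat.pos_of_ne_zero (NeZero.ne q)
  have hr : (0 : ℤ) < (r : ℤ) := by exact_mod_cast Nat.pos_of_ne_zero (NeZero.ne r)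
  set u₂ : ℤ := (p : ℤ) * ((r : ℤ) * (u / (p : ℤ))) + u % (p : ℤ) with hu₂
  -- row arithmetic
  have hmodnn : 0 ≤ u % (p : ℤ) := Int.emod_nonneg u hp.ne'
  have hmodlt : u % (p : ℤ) < p := Int.emod_lt_of_pos u hp
  have hu₂mod : u₂ % (p : ℤ) = u % (p : ℤ) := by
    rw [hu₂, add_comm, Int.add_mul_emod_self_left, Int.emod_emod_of_dvd]
    exact dvd_refl _
  have hu₂div : u₂ / (p : ℤ) = (r : ℤ) * (u / (p : ℤ)) := by
    rw [hu₂, add_comm, Int.add_mul_ediv_left _ _ hp.ne',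
      Int.ediv_eq_zero_of_lt hmodnn hmodlt, zero_add]
  -- column arithmetic
  have hrq : (0 : ℤ) < ((r * q : ℕ) : ℤ) := by
    push_cast; positivity
  set j : ℤ := v % ((r * q : ℕ) : ℤ) with hj
  have hjnn : 0 ≤ j := Int.emod_nonneg v hrq.ne'
  have hjlt : j < (r * q : ℕ) := Int.emod_lt_of_pos v hrq
  have hveq : v = ((r * q : ℕ) : ℤ) * (v / ((r * q : ℕ) : ℤ)) + j := by
    rw [hj]; exact (Int.mul_ediv_add_emod v _).symm
  set v' : ℤ := v / ((r * q : ℕ) : ℤ) with hv'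
  -- v % q = j % q
  have hvmodq : v % (q : ℤ) = j % (q : ℤ) := by
    conv_lhs => rw [hveq]
    push_cast
    rw [mul_comm (r : ℤ) (q : ℤ), mul_assoc, add_comm, Int.add_mul_emod_self_left]
  -- v / q = r * v' + j / q
  have hvdivq : v / (q : ℤ) = (r : ℤ) * v' + j / (q : ℤ) := by
    conv_lhs => rw [hveq]
    push_cast
    rw [mul_comm (r : ℤ) (q : ℤ), mul_assoc, add_comm,
      Int.add_mul_ediv_left _ _ hq.ne', add_comm]
  have hjdivnn : 0 ≤ j / (q : ℤ) := Int.ediv_nonneg hjnn hq.le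
  have hjdivlt : j / (q : ℤ) < r := by
    rw [Int.ediv_lt_iff_lt_mul hq]
    calc j < ((r * q : ℕ) : ℤ) := hjlt
    _ = (r : ℤ) * (q : ℤ) := by push_cast; ring
  -- unfold both sides
  show intCoeff (sectMat r A ⟨(u % (p:ℤ)).toNat, _⟩ ⟨(v % ((r*q:ℕ):ℤ)).toNat, _⟩)
      (v / ((r*q:ℕ):ℤ) - u / (p:ℤ)) =
    intCoeff (A ⟨(u₂ % (p:ℤ)).toNat, _⟩ ⟨(v % (q:ℤ)).toNat, _⟩)
      (v / (q:ℤ) - u₂ / (p:ℤ))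
  simp only [hu₂mod, hu₂div, hvdivq, hvmodq]
  set m : ℤ := v' - u / (p : ℤ) with hm
  have hexp : (r:ℤ) * v' + j / (q:ℤ) - (r:ℤ) * (u / (p:ℤ)) = j / (q:ℤ) + (r:ℤ) * m := by
    rw [hm]; ring
  rw [hexp]
  -- identify column Fin indices
  have hcol : (j.toNat) % q = (j % (q:ℤ)).toNat := by
    have h1 : ((j.toNat % q : ℕ) : ℤ) = ((j % (q:ℤ)).toNat : ℤ) := by
      push_cast
      rw [Int.toNat_of_nonneg hjnn, Int.toNat_of_nonneg (Int.emod_nonneg j hq.ne')]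
    exact_mod_cast h1
  have hkdiv : ((j.toNat / q : ℕ) : ℤ) = j / (q : ℤ) := by
    push_cast [Int.natCast_ediv]
    rw [Int.toNat_of_nonneg hjnn]
  by_cases hm0 : 0 ≤ m
  · -- both sides are genuine coefficients
    have he0 : 0 ≤ j / (q:ℤ) + (r:ℤ) * m := by positivity
    have hcast : j / (q:ℤ) + (r:ℤ) * m = ((j.toNat / q + r * m.toNat : ℕ) : ℤ) := by
      push_cast
      rw [Int.toNat_of_nonneg hjnn, Int.toNat_of_nonneg hm0]
    simp only [intCoeff, sectMat, veronese, hm0, he0, if_pos, hcast,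
      Int.toNat_natCast, PowerSeries.coeff_mk, hcol]
    rw [if_pos (Int.natCast_nonneg _)]
    simp only [← hj, hcol]
  · -- both sides vanish
    have hmneg : m ≤ -1 := by omega
    have he : j / (q:ℤ) + (r:ℤ) * m < 0 := by
      have : (r:ℤ) * m ≤ (r:ℤ) * (-1) := by
        exact mul_le_mul_of_nonneg_left hmneg hr.le
      linarith
    simp only [intCoeff, if_neg hm0, if_neg (not_le.mpr he)]

private lemma rowmap_strictMono {p : ℕ} [NeZero p] (r : ℕ) [NeZero r] :
    StrictMono (fun u : ℤ => (p : ℤ) * ((r : ℤ) * (u / (p : ℤ))) + u % (p : ℤ)) := by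
  have hp : (0 : ℤ) < (p : ℤ) := by exact_mod_cast Nat.pos_of_ne_zero (NeZero.ne p)
  have hr1 : (1 : ℤ) ≤ (r : ℤ) := by exact_mod_cast Nat.pos_of_ne_zero (NeZero.ne r)
  intro u u₁ h
  have hd : u / (p:ℤ) ≤ u₁ / (p:ℤ) := Int.ediv_le_ediv hp h.le
  have h1 : 0 ≤ u % (p:ℤ) := Int.emod_nonneg u hp.ne'
  have h2 : u % (p:ℤ) < p := Int.emod_lt_of_pos u hp
  have h3 : 0 ≤ u₁ % (p:ℤ) := Int.emod_nonneg u₁ hp.ne'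
  have h4 : u₁ % (p:ℤ) < p := Int.emod_lt_of_pos u₁ hp
  have he : u = (p:ℤ) * (u / p) + u % p := (Int.mul_ediv_add_emod u _).symm
  have he1 : u₁ = (p:ℤ) * (u₁ / p) + u₁ % p := (Int.mul_ediv_add_emod u₁ _).symm
  show (p:ℤ) * ((r:ℤ) * (u / p)) + u % p < (p:ℤ) * ((r:ℤ) * (u₁ / p)) + u₁ % p
  rcases eq_or_lt_of_le hd with hd' | hd'
  · have : u % (p:ℤ) < u₁ % (p:ℤ) := by
      rw [he, he1, hd'] at h
      exact lt_of_add_lt_add_left h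
    rw [hd']
    linarith
  · have hstep : u / (p:ℤ) + 1 ≤ u₁ / (p:ℤ) := hd'
    have hmul : (p:ℤ) * ((r:ℤ) * (u / p + 1)) ≤ (p:ℤ) * ((r:ℤ) * (u₁ / p)) := by
      apply mul_le_mul_of_nonneg_left _ hp.le
      exact mul_le_mul_of_nonneg_left hstep (by linarith)
    have hexp2 : (p:ℤ) * ((r:ℤ) * (u / p + 1)) =
        (p:ℤ) * ((r:ℤ) * (u / p)) + (p:ℤ) * (r:ℤ) := by ring
    have hpr : (p:ℤ) ≤ (p:ℤ) * (r:ℤ) := le_mul_of_one_le_right hp.le hr1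
    linarith

/-- If `A` is fully interlacing then so is `S^{(r)} A`; moreover
`Lace(S^{(r)}A)` is the submatrix of `Lace(A)` consisting of all rows whose
index is congruent to one of `0, 1, …, p-1` modulo `rp` (the row of index
`u = p·u' + i` of `Lace(S^{(r)}A)` is the row of index `rp·u' + i` of
`Lace(A)`). -/
theorem stmt13 {p q : ℕ} [NeZero p] [NeZero q] (r : ℕ) [NeZero r]
    (A : Fin p → Fin q → PowerSeries ℝ) (hA : FullyInterlacing A) :
    FullyInterlacing (sectMat r A) ∧
      ∀ u v : ℤ, lace (sectMat r A) u v =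
        lace A ((p : ℤ) * ((r : ℤ) * (u / (p : ℤ))) + u % (p : ℤ)) v := by
  refine ⟨?_, fun u v => lace_sect_key r A u v⟩
  intro n rows cols hrows hcols
  have hmat : (Matrix.of fun a b => lace (sectMat r A) (rows a) (cols b)) =
      Matrix.of fun a b => lace A
        ((p : ℤ) * ((r : ℤ) * (rows a / (p : ℤ))) + rows a % (p : ℤ)) (cols b) := by
    ext a b
    exact lace_sect_key r A (rows a) (cols b)
  rw [hmat]
  exact hA n _ cols ((rowmap_strictMono r).comp hrows) hcols
end

section
/- A power series C(x) = B(x²) + x·A(x²) ∈ ℝ[[x]] is Hurwitz (its Hurwitz matrix (c_{2v-u})_{u,v∈ℤ} is totally positive) only if both A(x) and B(x) are AESW series (their Toeplitz matrices are totally positive). -/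
open scoped BigOperators

/-- If `C(x) = B(x²) + x·A(x²)` is Hurwitz, i.e. its Hurwitz matrix
`(c_{2v-u})` is totally positive, then both `A` and `B` are AESW series. -/
theorem stmt19 (A B C : PowerSeries ℝ)
    (hodd : ∀ n : ℕ, PowerSeries.coeff (2 * n + 1) C = PowerSeries.coeff n A)
    (heven : ∀ n : ℕ, PowerSeries.coeff (2 * n) C = PowerSeries.coeff n B)
    (hHur : TP fun u v => intCoeff C (2 * v - u)) :
    IsAESW A ∧ IsAESW B := by

  have hoddZ : ∀ k : ℤ, intCoeff C (2 * k + 1) = intCoeff A k := by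
    intro k
    rcases le_or_gt 0 k with hk | hk
    · have h1 : (0:ℤ) ≤ 2 * k + 1 := by omega
      simp only [intCoeff, if_pos hk, if_pos h1]
      have : (2 * k + 1).toNat = 2 * k.toNat + 1 := by omega
      rw [this, hodd]
    · have h1 : ¬ (0:ℤ) ≤ 2 * k + 1 := by omega
      rw [intCoeff, intCoeff, if_neg (by omega), if_neg (by omega)]
  have hevenZ : ∀ k : ℤ, intCoeff C (2 * k) = intCoeff B k := by
    intro k
    rcases le_or_gt 0 k with hk | hk
    · have h1 : (0:ℤ) ≤ 2 * k := by omega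
      simp only [intCoeff, if_pos hk, if_pos h1]
      have : (2 * k).toNat = 2 * k.toNat := by omega
      rw [this, heven]
    · have h1 : ¬ (0:ℤ) ≤ 2 * k := by omega
      rw [intCoeff, intCoeff, if_neg (by omega), if_neg (by omega)]
  constructor
  · intro n r c hr hc
    have := hHur n (fun a => 2 * r a - 1) c
      (fun a b hab => by simp only []; have := hr hab; omega) hc
    convert this using 2
    funext a b
    simp only [Matrix.of_apply]
    have : 2 * c b - (2 * r a - 1) = 2 * (c b - r a) + 1 := by ring
    rw [this, hoddZ]
  · intro n r c hr hc
    have := hHur n (fun a => 2 * r a) c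
      (fun a b hab => by simp only []; have := hr hab; omega) hc
    convert this using 2
    funext a b
    simp only [Matrix.of_apply]
    have : 2 * c b - 2 * r a = 2 * (c b - r a) := by ring
    rw [this, hevenZ]
end
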